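/- Let M be a matroid on [n] with dual matroid M*. Writing F_q(M) = Σ_{α ⊨ n} p_α(q) M_α in the monomial basis of quasisymmetric functions, one has F_q(M*) = Σ_{α ⊨ n} p_α(q) M_{rev(α)}; that is, F_q(M) has coefficients p_α(q) if and only if F_q(M*) has coefficient p_α(q) attached to the reverse composition rev(α). -/

import Mathlib

open scoped Classical Pointwise BigOperators


/-- The dot product pairing on `ℝⁿ`. -/
def dotp {n : ℕ} (ω x : Fin n → ℝ) : ℝ := ∑ i, ω i * x i

/-- The set of points of `Q` on which the linear functional `⟨ω, ·⟩` attains its maximum. -/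
def argmaxSet {n : ℕ} (Q : Set (Fin n → ℝ)) (ω : Fin n → ℝ) : Set (Fin n → ℝ) :=
  {x | x ∈ Q ∧ ∀ y ∈ Q, dotp ω y ≤ dotp ω x}

/-- `G` is a face of `Q` : it is the argmax set of some linear functional. -/
def IsFace {n : ℕ} (Q G : Set (Fin n → ℝ)) : Prop := ∃ ω : Fin n → ℝ, G = argmaxSet Q ω

/-- The dimension of a convex body: the rank of its direction vector space. -/
noncomputable def pdim {n : ℕ} (s : Set (Fin n → ℝ)) : ℕ := Module.finrank ℝ (vectorSpan ℝ s)

/-- `Q` is a (nonempty) convex polytope. -/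
def IsPolytope {n : ℕ} (Q : Set (Fin n → ℝ)) : Prop :=
  ∃ V : Finset (Fin n → ℝ), V.Nonempty ∧ Q = convexHull ℝ (V : Set (Fin n → ℝ))

/-- A flag `∅ ⊂ F₁ ⊂ ⋯ ⊂ F_k ⊂ [n]` of subsets of `[n]`, recorded by its set
`C = {F₁,…,F_k}` of proper nonempty intermediate subsets, which form a chain. -/
def IsFlag (n : ℕ) (C : Finset (Finset (Fin n))) : Prop :=
  (∀ A ∈ C, A.Nonempty ∧ A ≠ Finset.univ) ∧ (∀ A ∈ C, ∀ B ∈ C, A ⊆ B ∨ B ⊆ A)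

/-- The level of an element: the number of members of the chain not containing it.  Elements of
`F_i ∖ F_{i-1}` have level `i - 1`-ish: level `0` on the smallest set, etc. -/
def lv {n : ℕ} (C : Finset (Finset (Fin n))) (p : Fin n) : ℕ := (C.filter (fun A => p ∉ A)).card

/-- The `j`-th member `F_j` of the full chain `∅ = F₀ ⊂ F₁ ⊂ ⋯ ⊂ F_{k+1} = [n]` of the flag. -/
def fullChain {n : ℕ} (C : Finset (Finset (Fin n))) (j : ℕ) : Finset (Fin n) :=
  Finset.univ.filter (fun p => lv C p < j)

/-- The type of a flag: the composition `(|F₁|-|F₀|, …, |F_{k+1}|-|F_k|)` of `n`. -/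
def flagType {n : ℕ} (C : Finset (Finset (Fin n))) : List ℕ :=
  (List.range (C.card + 1)).map (fun j => (fullChain C (j + 1)).card - (fullChain C j).card)

/-- The relative interior of the braid cone of a flag: weight vectors `ω` that are constant on
each block `F_i ∖ F_{i-1}` and satisfy `ω|_{F_{i+1}∖F_i} < ω|_{F_i∖F_{i-1}}` (strictly
decreasing along the flag). -/
def relintBraidCone {n : ℕ} (C : Finset (Finset (Fin n))) : Set (Fin n → ℝ) :=
  {x | ∀ p q : Fin n, ((∀ A ∈ C, (p ∈ A ↔ q ∈ A)) → x p = x q) ∧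
      ((∃ A ∈ C, p ∈ A ∧ q ∉ A) → x q < x p)}

/-- Homogeneous quasisymmetric functions in the monomial basis: finitely supported
coefficient functions on compositions (lists of positive integers). -/
abbrev QS : Type := (List ℕ) →₀ ℚ

/-- The monomial quasisymmetric function `M_α`. -/
noncomputable def Mc (l : List ℕ) : QS := Finsupp.single l 1

/-- The principal specialization at `-1`:  `ps(M_α)(-1) = (-1)^{k(α)}`, extended linearly. -/
noncomputable def psNeg (f : QS) : ℚ := f.sum (fun l c => c * (-1) ^ l.length)

/-- The `f`-polynomial of a polytope `P ⊆ ℝⁿ`, evaluated at `t`. -/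
noncomputable def fPoly {n : ℕ} (P : Set (Fin n → ℝ)) (t : ℚ) : ℚ :=
  ∑ i ∈ Finset.range n, ((Set.ncard {G : Set (Fin n → ℝ) | IsFace P G ∧ pdim G = i} : ℚ) * t ^ i)

/-- The weighted quasisymmetric enumerator `F_q(Q) = Σ_F q^{rk(F)} M_{type(F)}`, where the rank
statistic `rk` on flags is given as an argument. -/
noncomputable def FqEnum (n : ℕ) (rk : Finset (Finset (Fin n)) → ℕ) (q : ℚ) : QS :=
  ∑ C : Finset (Finset (Fin n)), if IsFlag n C then q ^ (rk C) • Mc (flagType C) else 0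

/-- A matroid on `[n]`, given by its nonempty collection of bases satisfying the exchange
property. -/
def IsMatroid (n : ℕ) (𝓑 : Finset (Finset (Fin n))) : Prop :=
  𝓑.Nonempty ∧
    ∀ B₁ ∈ 𝓑, ∀ B₂ ∈ 𝓑, ∀ i ∈ B₁ \ B₂, ∃ j ∈ B₂ \ B₁, insert j (B₁.erase i) ∈ 𝓑

/-- The indicator vector `e_B = Σ_{i ∈ B} e_i` of a subset `B ⊆ [n]`. -/
def indVec {n : ℕ} (B : Finset (Fin n)) : Fin n → ℝ := fun i => if i ∈ B then 1 else 0

/-- The matroid base polytope `P_M = Conv{e_B : B ∈ 𝓑(M)}`. -/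
noncomputable def basePoly {n : ℕ} (𝓑 : Finset (Finset (Fin n))) : Set (Fin n → ℝ) :=
  convexHull ℝ (indVec '' (𝓑 : Set (Finset (Fin n))))

/-- The basis-exchange relation whose equivalence classes are the connected components of the
matroid: `i ~ j` iff there are bases `B₁, B₂` with `i ∈ B₁` and `B₂ = (B₁ ∖ {i}) ∪ {j}`. -/
def mRel {n : ℕ} (𝓑 : Finset (Finset (Fin n))) (i j : Fin n) : Prop :=
  ∃ B₁ ∈ 𝓑, i ∈ B₁ ∧ insert j (B₁.erase i) ∈ 𝓑

/-- The number of connected components of (the matroid with bases) `𝓑` that meet the ground set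
`ground`: the number of equivalence classes of the component relation restricted to `ground`. -/
noncomputable def cOn {n : ℕ} (ground : Finset (Fin n)) (𝓑 : Finset (Finset (Fin n))) : ℕ :=
  Set.ncard (Quot.mk (mRel 𝓑) '' (ground : Set (Fin n)))

/-- A subset is independent if it is contained in a basis. -/
def mIndep {n : ℕ} (𝓑 : Finset (Finset (Fin n))) (I : Finset (Fin n)) : Prop :=
  ∃ B ∈ 𝓑, I ⊆ B

/-- The bases of the restriction `M|_A`: maximal independent subsets of `A`. -/
noncomputable def basesRestrict {n : ℕ} (𝓑 : Finset (Finset (Fin n))) (A : Finset (Fin n)) :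
    Finset (Finset (Fin n)) :=
  A.powerset.filter (fun I => mIndep 𝓑 I ∧ ∀ J ∈ A.powerset, mIndep 𝓑 J → I ⊆ J → I = J)

/-- The bases of the contraction `M/A`: sets `I` disjoint from `A` such that `I ∪ B_A` is a basis
for some basis `B_A` of `M|_A`. -/
noncomputable def basesContract {n : ℕ} (𝓑 : Finset (Finset (Fin n))) (A : Finset (Fin n)) :
    Finset (Finset (Fin n)) :=
  (Finset.univ : Finset (Fin n)).powerset.filter
    (fun I => Disjoint I A ∧ ∃ BA ∈ basesRestrict 𝓑 A, I ∪ BA ∈ 𝓑)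

/-- The bases of the minor `(M|_X)/Y`. -/
noncomputable def minorBases {n : ℕ} (𝓑 : Finset (Finset (Fin n))) (X Y : Finset (Fin n)) :
    Finset (Finset (Fin n)) :=
  basesContract (basesRestrict 𝓑 X) Y

/-- The rank `r(A)` of a subset `A`: the size of a basis of `M|_A`. -/
noncomputable def rankOf {n : ℕ} (𝓑 : Finset (Finset (Fin n))) (A : Finset (Fin n)) : ℕ :=
  (basesRestrict 𝓑 A).sup Finset.card

/-- The bases of the matroid `M/F = M_ω` attached to a flag `F` (for any `ω` in the relative
interior of the braid cone of `F`): the bases of maximum `ω`-weight, i.e. those `B` with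
`|B ∩ F_i| = r(F_i)` for every member `F_i` of the full chain of the flag. -/
noncomputable def flagQuotBases {n : ℕ} (𝓑 : Finset (Finset (Fin n))) (C : Finset (Finset (Fin n))) :
    Finset (Finset (Fin n)) :=
  𝓑.filter (fun B => ∀ j ∈ Finset.range (C.card + 2), (B ∩ fullChain C j).card = rankOf 𝓑 (fullChain C j))

/-- The rank statistic `rk_{P_M}(F) = Σ_j rk((M|_{F_j})/F_{j-1})` of a flag, where
`rk(N) = (size of ground set of N) - c(N)`. -/
noncomputable def rkM {n : ℕ} (𝓑 : Finset (Finset (Fin n))) (C : Finset (Finset (Fin n))) : ℕ :=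
  ∑ j ∈ Finset.range (C.card + 1),
    ((fullChain C (j + 1)).card - (fullChain C j).card -
      cOn ((fullChain C (j + 1)) \ (fullChain C j))
        (minorBases 𝓑 (fullChain C (j + 1)) (fullChain C j)))

/-- The bases of the dual matroid `M*`: complements of the bases of `M`. -/
def dualBases {n : ℕ} (𝓑 : Finset (Finset (Fin n))) : Finset (Finset (Fin n)) :=
  𝓑.image (fun B => Finset.univ \ B)

/-- The weighted quasisymmetric enumerator `F_q(M) = F_q(P_M) = Σ_F q^{rk_{P_M}(F)} M_{type(F)}`
of a matroid, expanded in the monomial basis; its coefficient of `M_α` is the polynomial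
`p_α(q) = Σ_{F : type(F) = α} q^{rk_{P_M}(F)}`. -/
noncomputable def FqMat (n : ℕ) (𝓑 : Finset (Finset (Fin n))) (q : ℚ) : QS :=
  ∑ C : Finset (Finset (Fin n)),
    (if IsFlag n C then q ^ (rkM 𝓑 C) • Mc (flagType C) else 0)

namespace FqDual
open Finset

variable {n : ℕ}

/-- maximum intersection size of a member of `𝓑` with `A`. -/
def rnk (𝓑 : Finset (Finset (Fin n))) (A : Finset (Fin n)) : ℕ :=
  𝓑.sup fun B => (B ∩ A).card

lemma le_rnk {𝓑 : Finset (Finset (Fin n))} {B : Finset (Fin n)} (hB : B ∈ 𝓑)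
    (A : Finset (Fin n)) : (B ∩ A).card ≤ rnk 𝓑 A :=
  Finset.le_sup (f := fun B => (B ∩ A).card) hB

lemma exists_rnk {𝓑 : Finset (Finset (Fin n))} (hne : 𝓑.Nonempty) (A : Finset (Fin n)) :
    ∃ B ∈ 𝓑, (B ∩ A).card = rnk 𝓑 A := by
  obtain ⟨B, hB, h⟩ := Finset.exists_mem_eq_sup 𝓑 hne fun B => (B ∩ A).card
  exact ⟨B, hB, h.symm⟩

variable {𝓑 : Finset (Finset (Fin n))}

lemma card_eq_card (hM : IsMatroid n 𝓑) :
    ∀ B₁ ∈ 𝓑, ∀ B₂ ∈ 𝓑, B₁.card = B₂.card := by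
  suffices h : ∀ d B₁ B₂, B₁ ∈ 𝓑 → B₂ ∈ 𝓑 → (B₁ \ B₂).card = d → B₁.card = B₂.card by
    exact fun B₁ h₁ B₂ h₂ => h _ B₁ B₂ h₁ h₂ rfl
  intro d
  induction d using Nat.strong_induction_on with
  | _ d ih =>
    intro B₁ B₂ h₁ h₂ hd
    rcases eq_or_ne (B₁ \ B₂) ∅ with he | he
    · have hsub : B₁ ⊆ B₂ := sdiff_eq_empty_iff_subset.mp he
      have hsub2 : B₂ ⊆ B₁ := by
        intro x hx
        by_contra hxB
        obtain ⟨j, hj, -⟩ := hM.2 B₂ h₂ B₁ h₁ x (mem_sdiff.mpr ⟨hx, hxB⟩)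
        rw [he] at hj; exact absurd hj (notMem_empty j)
      rw [Finset.Subset.antisymm hsub hsub2]
    · obtain ⟨i, hi⟩ := nonempty_iff_ne_empty.mpr he
      obtain ⟨j, hj, hB₃⟩ := hM.2 B₁ h₁ B₂ h₂ i hi
      have hiB₁ : i ∈ B₁ := (mem_sdiff.mp hi).1
      have hiB₂ : i ∉ B₂ := (mem_sdiff.mp hi).2
      have hjB₂ : j ∈ B₂ := (mem_sdiff.mp hj).1
      have hjB₁ : j ∉ B₁ := (mem_sdiff.mp hj).2
      have hc : (insert j (B₁.erase i)).card = B₁.card := by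
        rw [card_insert_of_notMem (fun h => hjB₁ (mem_of_mem_erase h)),
          card_erase_of_mem hiB₁]
        have : 1 ≤ B₁.card := card_pos.mpr ⟨i, hiB₁⟩
        omega
      have hsd : insert j (B₁.erase i) \ B₂ = (B₁ \ B₂).erase i := by
        ext x
        simp only [mem_sdiff, mem_insert, mem_erase]
        constructor
        · rintro ⟨rfl | ⟨hxi, hx⟩, hxB⟩
          · exact absurd hjB₂ hxB
          · exact ⟨hxi, hx, hxB⟩
        · rintro ⟨hxi, hx, hxB⟩
          exact ⟨Or.inr ⟨hxi, hx⟩, hxB⟩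
      have hdpos : 0 < d := by
        rw [← hd]; exact card_pos.mpr ⟨i, hi⟩
      have hcard' : (insert j (B₁.erase i) \ B₂).card = d - 1 := by
        rw [hsd, card_erase_of_mem hi, hd]
      have := ih (d - 1) (by omega) _ _ hB₃ h₂ hcard'
      omega

lemma rnk_univ_eq (hM : IsMatroid n 𝓑) {B : Finset (Fin n)} (hB : B ∈ 𝓑) :
    B.card = rnk 𝓑 Finset.univ := by
  obtain ⟨B₀, hB₀, h₀⟩ := exists_rnk hM.1 Finset.univ
  rw [inter_univ] at h₀
  rw [card_eq_card hM B hB B₀ hB₀, h₀]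

/-- Key exchange lemma: if `B` is `X`-maximal but `Y`-deficient compared to an
`X`-maximal `B₀`, then one can add one `Y`-element keeping `B ∩ Y` and `X`-maximality. -/
lemma exchange_step (hM : IsMatroid n 𝓑) {X Y : Finset (Fin n)} (hYX : Y ⊆ X) :
    ∀ d (B B₀ : Finset (Fin n)), B ∈ 𝓑 → B₀ ∈ 𝓑 → (B \ B₀).card = d →
      (B ∩ X).card = rnk 𝓑 X → (B₀ ∩ X).card = rnk 𝓑 X →
      (B ∩ Y).card < (B₀ ∩ Y).card →
      ∃ B' ∈ 𝓑, B ∩ Y ⊆ B' ∧ (B' ∩ Y).card = (B ∩ Y).card + 1 ∧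
        (B' ∩ X).card = rnk 𝓑 X := by
  intro d
  induction d using Nat.strong_induction_on with
  | _ d ih =>
    intro B B₀ hB hB₀ hd hBX hB₀X hlt
    -- counting decompositions
    have split : ∀ A : Finset (Fin n), (B ∩ A ∩ B₀).card + ((B \ B₀) ∩ A).card = (B ∩ A).card := by
      intro A
      have h1 : (B ∩ A) \ B₀ = (B \ B₀) ∩ A := by
        ext x; simp only [mem_sdiff, mem_inter]; tauto
      rw [← h1]
      exact card_inter_add_card_sdiff (B ∩ A) B₀
    have split₀ : ∀ A : Finset (Fin n), (B₀ ∩ A ∩ B).card + ((B₀ \ B) ∩ A).card = (B₀ ∩ A).card := by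
      intro A
      have h1 : (B₀ ∩ A) \ B = (B₀ \ B) ∩ A := by
        ext x; simp only [mem_sdiff, mem_inter]; tauto
      rw [← h1]
      exact card_inter_add_card_sdiff (B₀ ∩ A) B
    have hBB₀ : B.card = B₀.card := card_eq_card hM B hB B₀ hB₀
    have hsdcard : (B \ B₀).card = (B₀ \ B).card := by
      have h1 := card_inter_add_card_sdiff B B₀
      have h2 := card_inter_add_card_sdiff B₀ B
      rw [inter_comm] at h2
      omega
    have hcomm : ∀ A : Finset (Fin n), (B ∩ A ∩ B₀).card = (B₀ ∩ A ∩ B).card := by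
      intro A; congr 1; ext x; simp only [mem_inter]; tauto
    rcases eq_or_ne (B \ B₀) ∅ with he | he
    · -- B = B₀, contradiction
      have : B = B₀ := Finset.eq_of_subset_of_card_le (sdiff_eq_empty_iff_subset.mp he)
        (le_of_eq hBB₀.symm)
      rw [this] at hlt; omega
    · by_cases hcase1 : ∃ i ∈ B \ B₀, i ∉ X
      · obtain ⟨i, hi, hiX⟩ := hcase1
        have hiY : i ∉ Y := fun h => hiX (hYX h)
        obtain ⟨j, hj, hB₁⟩ := hM.2 B hB B₀ hB₀ i hi
        have hiB : i ∈ B := (mem_sdiff.mp hi).1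
        have hjB : j ∉ B := (mem_sdiff.mp hj).2
        set B₁ := insert j (B.erase i) with hB₁def
        have hBXsub : B ∩ X ⊆ B₁ ∩ X := by
          intro x hx
          rcases mem_inter.mp hx with ⟨hx1, hx2⟩
          exact mem_inter.mpr ⟨mem_insert_of_mem (mem_erase.mpr ⟨fun h => hiX (h ▸ hx2), hx1⟩), hx2⟩
        have hBYsub : B ∩ Y ⊆ B₁ ∩ Y := by
          intro x hx
          rcases mem_inter.mp hx with ⟨hx1, hx2⟩
          exact mem_inter.mpr ⟨mem_insert_of_mem (mem_erase.mpr ⟨fun h => hiY (h ▸ hx2), hx1⟩), hx2⟩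
        have hB₁X : (B₁ ∩ X).card = rnk 𝓑 X :=
          le_antisymm (le_rnk hB₁ X) (hBX ▸ card_le_card hBXsub)
        by_cases himp : (B ∩ Y).card < (B₁ ∩ Y).card
        · refine ⟨B₁, hB₁, fun x hx => (mem_inter.mp (hBYsub hx)).1, ?_, hB₁X⟩
          have hsub2 : B₁ ∩ Y ⊆ insert j (B ∩ Y) := by
            intro x hx
            rcases mem_inter.mp hx with ⟨hx1, hx2⟩
            rcases mem_insert.mp hx1 with rfl | hx1
            · exact mem_insert_self _ _
            · exact mem_insert_of_mem (mem_inter.mpr ⟨mem_of_mem_erase hx1, hx2⟩)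
          have := card_le_card hsub2
          have := card_insert_le j (B ∩ Y)
          omega
        · have heq : (B₁ ∩ Y).card = (B ∩ Y).card :=
            le_antisymm (by omega) (card_le_card hBYsub)
          have hd1 : (B₁ \ B₀).card = d - 1 := by
            have hsd : B₁ \ B₀ = (B \ B₀).erase i := by
              ext x
              simp only [hB₁def, mem_sdiff, mem_insert, mem_erase]
              constructor
              · rintro ⟨rfl | ⟨hxi, hx⟩, hxB⟩
                · exact absurd (mem_sdiff.mp hj).1 hxB
                · exact ⟨hxi, hx, hxB⟩
              · rintro ⟨hxi, hx, hxB⟩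
                exact ⟨Or.inr ⟨hxi, hx⟩, hxB⟩
            rw [hsd, card_erase_of_mem hi, hd]
          have hdpos : 0 < d := hd ▸ card_pos.mpr ⟨i, hi⟩
          obtain ⟨B', hB', hsub', hcard', hX'⟩ :=
            ih (d - 1) (by omega) B₁ B₀ hB₁ hB₀ hd1 hB₁X hB₀X (by omega)
          exact ⟨B', hB', (subset_inter_iff.mp ((subset_inter_iff.mpr
            ⟨fun x hx => (mem_inter.mp (hBYsub hx)).1, fun x hx => (mem_inter.mp (hBYsub hx)).2⟩).trans
            (subset_inter_iff.mpr ⟨hsub', inter_subset_right⟩))).1, by omega, hX'⟩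
      · push_neg at hcase1
        -- B \ B₀ ⊆ X; derive B₀ \ B ⊆ X
        have hBsubX : B \ B₀ ⊆ X := hcase1
        have hBsdX : (B \ B₀) ∩ X = B \ B₀ := inter_eq_left.mpr hBsubX
        have hB₀sdX : B₀ \ B ⊆ X := by
          have h1 := split X
          have h2 := split₀ X
          rw [hBsdX] at h1
          have h3 : ((B₀ \ B) ∩ X).card = (B₀ \ B).card := by
            have := hcomm X
            omega
          intro x hx
          have : (B₀ \ B) ∩ X = B₀ \ B :=
            Finset.eq_of_subset_of_card_le inter_subset_left (le_of_eq h3.symm)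
          rw [← this] at hx
          exact (mem_inter.mp hx).2
        by_cases hcase2 : ∃ i ∈ B \ B₀, i ∉ Y
        · obtain ⟨i, hi, hiY⟩ := hcase2
          obtain ⟨j, hj, hB₁⟩ := hM.2 B hB B₀ hB₀ i hi
          have hiB : i ∈ B := (mem_sdiff.mp hi).1
          have hjB : j ∉ B := (mem_sdiff.mp hj).2
          have hjB₀ : j ∈ B₀ := (mem_sdiff.mp hj).1
          have hiX : i ∈ X := hBsubX hi
          have hjX : j ∈ X := hB₀sdX hj
          have hij : i ≠ j := fun h => hjB (h ▸ hiB)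
          set B₁ := insert j (B.erase i) with hB₁def
          have hB₁Xeq : B₁ ∩ X = insert j ((B ∩ X).erase i) := by
            ext x
            simp only [hB₁def, mem_inter, mem_insert, mem_erase]
            constructor
            · rintro ⟨rfl | ⟨hxi, hx⟩, hx2⟩
              · exact Or.inl rfl
              · exact Or.inr ⟨hxi, hx, hx2⟩
            · rintro (rfl | ⟨hxi, hx, hx2⟩)
              · exact ⟨Or.inl rfl, hjX⟩
              · exact ⟨Or.inr ⟨hxi, hx⟩, hx2⟩
          have hB₁X : (B₁ ∩ X).card = rnk 𝓑 X := by
            rw [hB₁Xeq, card_insert_of_notMem (fun h => hjB (mem_inter.mp (mem_of_mem_erase h)).1),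
              card_erase_of_mem (mem_inter.mpr ⟨hiB, hiX⟩)]
            have : 1 ≤ (B ∩ X).card := card_pos.mpr ⟨i, mem_inter.mpr ⟨hiB, hiX⟩⟩
            omega
          have hBYsub : B ∩ Y ⊆ B₁ ∩ Y := by
            intro x hx
            rcases mem_inter.mp hx with ⟨hx1, hx2⟩
            exact mem_inter.mpr ⟨mem_insert_of_mem (mem_erase.mpr ⟨fun h => hiY (h ▸ hx2), hx1⟩), hx2⟩
          by_cases hjY : j ∈ Y
          · refine ⟨B₁, hB₁, fun x hx => (mem_inter.mp (hBYsub hx)).1, ?_, hB₁X⟩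
            have : B₁ ∩ Y = insert j (B ∩ Y) := by
              ext x
              simp only [hB₁def, mem_inter, mem_insert, mem_erase]
              constructor
              · rintro ⟨rfl | ⟨hxi, hx⟩, hx2⟩
                · exact Or.inl rfl
                · exact Or.inr ⟨hx, hx2⟩
              · rintro (rfl | ⟨hx, hx2⟩)
                · exact ⟨Or.inl rfl, hjY⟩
                · exact ⟨Or.inr ⟨fun h => hiY (h ▸ hx2), hx⟩, hx2⟩
            rw [this, card_insert_of_notMem (fun h => hjB (mem_inter.mp h).1)]
          · have heq : B₁ ∩ Y = B ∩ Y := by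
              ext x
              simp only [hB₁def, mem_inter, mem_insert, mem_erase]
              constructor
              · rintro ⟨rfl | ⟨hxi, hx⟩, hx2⟩
                · exact absurd hx2 hjY
                · exact ⟨hx, hx2⟩
              · rintro ⟨hx, hx2⟩
                exact ⟨Or.inr ⟨fun h => hiY (h ▸ hx2), hx⟩, hx2⟩
            have hd1 : (B₁ \ B₀).card = d - 1 := by
              have hsd : B₁ \ B₀ = (B \ B₀).erase i := by
                ext x
                simp only [hB₁def, mem_sdiff, mem_insert, mem_erase]
                constructor
                · rintro ⟨rfl | ⟨hxi, hx⟩, hxB⟩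
                  · exact absurd hjB₀ hxB
                  · exact ⟨hxi, hx, hxB⟩
                · rintro ⟨hxi, hx, hxB⟩
                  exact ⟨Or.inr ⟨hxi, hx⟩, hxB⟩
              rw [hsd, card_erase_of_mem hi, hd]
            have hdpos : 0 < d := hd ▸ card_pos.mpr ⟨i, hi⟩
            obtain ⟨B', hB', hsub', hcard', hX'⟩ :=
              ih (d - 1) (by omega) B₁ B₀ hB₁ hB₀ hd1 hB₁X hB₀X (heq ▸ hlt)
            rw [heq] at hsub' hcard'
            exact ⟨B', hB', hsub', hcard', hX'⟩
        · push_neg at hcase2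
          -- B \ B₀ ⊆ Y : contradiction by counting
          exfalso
          have h1 := split Y
          have h2 := split₀ Y
          have h3 : (B \ B₀) ∩ Y = B \ B₀ := inter_eq_left.mpr hcase2
          have h4 : ((B₀ \ B) ∩ Y).card ≤ (B₀ \ B).card := card_le_card inter_subset_left
          have h5 := hcomm Y
          rw [h3] at h1
          omega

end FqDual
namespace FqDual
open Finset

variable {n : ℕ} {𝓑 : Finset (Finset (Fin n))}

lemma raise_with (hM : IsMatroid n 𝓑) {X Y : Finset (Fin n)} (hYX : Y ⊆ X)
    (hdm : ∃ B₀ ∈ 𝓑, (B₀ ∩ Y).card = rnk 𝓑 Y ∧ (B₀ ∩ X).card = rnk 𝓑 X) :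
    ∀ m B, B ∈ 𝓑 → (B ∩ X).card = rnk 𝓑 X → rnk 𝓑 Y - (B ∩ Y).card = m →
      ∃ B' ∈ 𝓑, B ∩ Y ⊆ B' ∧ (B' ∩ Y).card = rnk 𝓑 Y ∧ (B' ∩ X).card = rnk 𝓑 X := by
  intro m
  induction m with
  | zero =>
    intro B hB hBX hm
    have := le_rnk hB Y
    exact ⟨B, hB, inter_subset_left, by omega, hBX⟩
  | succ m ih =>
    intro B hB hBX hm
    obtain ⟨B₀, hB₀, hB₀Y, hB₀X⟩ := hdm
    have hlt : (B ∩ Y).card < (B₀ ∩ Y).card := by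
      have := le_rnk hB Y
      omega
    obtain ⟨B₁, hB₁, hsub, hcard, hX⟩ :=
      exchange_step hM hYX (B \ B₀).card B B₀ hB hB₀ rfl hBX hB₀X hlt
    have hsub' : B ∩ Y ⊆ B₁ ∩ Y :=
      subset_inter hsub (inter_subset_right)
    have hm' : rnk 𝓑 Y - (B₁ ∩ Y).card = m := by
      have := le_rnk hB₁ Y
      omega
    obtain ⟨B', hB', hsub'', hY', hX'⟩ := ih B₁ hB₁ hX hm'
    exact ⟨B', hB', hsub'.trans hsub'', hY', hX'⟩

lemma exists_bothmax (hM : IsMatroid n 𝓑) {X Y : Finset (Fin n)} (hYX : Y ⊆ X) :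
    ∃ B₀ ∈ 𝓑, (B₀ ∩ Y).card = rnk 𝓑 Y ∧ (B₀ ∩ X).card = rnk 𝓑 X := by
  obtain ⟨BY, hBY, hBYY⟩ := exists_rnk hM.1 Y
  have hdm : ∃ B₀ ∈ 𝓑, (B₀ ∩ X).card = rnk 𝓑 X ∧ (B₀ ∩ univ).card = rnk 𝓑 univ := by
    obtain ⟨BX, hBX, hBXX⟩ := exists_rnk hM.1 X
    exact ⟨BX, hBX, hBXX, by rw [inter_univ]; exact rnk_univ_eq hM hBX⟩
  obtain ⟨B₂, hB₂, hsub, hX, -⟩ :=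
    raise_with hM (subset_univ X) hdm (rnk 𝓑 X - (BY ∩ X).card) BY hBY
      (by rw [inter_univ]; exact rnk_univ_eq hM hBY) rfl
  refine ⟨B₂, hB₂, ?_, hX⟩
  have h1 : BY ∩ Y ⊆ B₂ ∩ Y := by
    intro x hx
    rcases mem_inter.mp hx with ⟨hx1, hx2⟩
    exact mem_inter.mpr ⟨hsub (mem_inter.mpr ⟨hx1, hYX hx2⟩), hx2⟩
  have h2 := card_le_card h1
  have h3 := le_rnk hB₂ Y
  omega

lemma raise' (hM : IsMatroid n 𝓑) {X Y : Finset (Fin n)} (hYX : Y ⊆ X)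
    {B : Finset (Fin n)} (hB : B ∈ 𝓑) (hBX : (B ∩ X).card = rnk 𝓑 X) :
    ∃ B' ∈ 𝓑, B ∩ Y ⊆ B' ∧ (B' ∩ Y).card = rnk 𝓑 Y ∧ (B' ∩ X).card = rnk 𝓑 X :=
  raise_with hM hYX (exists_bothmax hM hYX) _ B hB hBX rfl

lemma mem_basesRestrict_def {𝓒 : Finset (Finset (Fin n))} {A I : Finset (Fin n)} :
    I ∈ basesRestrict 𝓒 A ↔
      I ⊆ A ∧ mIndep 𝓒 I ∧ ∀ J ⊆ A, mIndep 𝓒 J → I ⊆ J → I = J := by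
  simp only [basesRestrict, mem_filter, mem_powerset]

lemma basesRestrict_eq (hM : IsMatroid n 𝓑) (A : Finset (Fin n)) :
    basesRestrict 𝓑 A = (𝓑.filter fun B => (B ∩ A).card = rnk 𝓑 A).image (· ∩ A) := by
  ext I
  simp only [mem_basesRestrict_def, mem_image]
  constructor
  · rintro ⟨hIA, ⟨B, hB, hIB⟩, hmax⟩
    have h1 : I = B ∩ A :=
      hmax (B ∩ A) inter_subset_right ⟨B, hB, inter_subset_left⟩
        (subset_inter hIB hIA)
    have h2 : (B ∩ A).card = rnk 𝓑 A := by
      by_contra hne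
      have hle := le_rnk hB A
      obtain ⟨B', hB', hsub, hY, -⟩ := raise' hM (subset_univ A) hB
        (by rw [inter_univ]; exact rnk_univ_eq hM hB)
      have h3 : I = B' ∩ A :=
        hmax (B' ∩ A) inter_subset_right ⟨B', hB', inter_subset_left⟩
          (h1 ▸ subset_inter hsub inter_subset_right)
      rw [h1] at h3
      have := congrArg Finset.card h3
      omega
    exact ⟨B, mem_filter.mpr ⟨hB, h2⟩, h1.symm⟩
  · rintro ⟨B, hBf, rfl⟩
    rw [mem_filter] at hBf
    obtain ⟨hB, hBA⟩ := hBf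
    refine ⟨inter_subset_right, ⟨B, hB, inter_subset_left⟩, ?_⟩
    intro J hJ ⟨B'', hB'', hJB''⟩ hsub
    have h1 : J ⊆ B'' ∩ A := subset_inter hJB'' hJ
    have h2 : J.card ≤ (B ∩ A).card := by
      have := card_le_card h1
      have := le_rnk hB'' A
      omega
    exact Finset.eq_of_subset_of_card_le hsub h2

lemma mem_basesRestrict_iff (hM : IsMatroid n 𝓑) {A I : Finset (Fin n)} :
    I ∈ basesRestrict 𝓑 A ↔ ∃ B ∈ 𝓑, (B ∩ A).card = rnk 𝓑 A ∧ I = B ∩ A := by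
  rw [basesRestrict_eq hM]
  constructor
  · intro h
    obtain ⟨B, hB, rfl⟩ := mem_image.mp h
    rw [mem_filter] at hB
    exact ⟨B, hB.1, hB.2, rfl⟩
  · rintro ⟨B, hB, h, rfl⟩
    exact mem_image.mpr ⟨B, mem_filter.mpr ⟨hB, h⟩, rfl⟩

lemma basesRestrict_restrict (hM : IsMatroid n 𝓑) {X Y : Finset (Fin n)} (hYX : Y ⊆ X) :
    basesRestrict (basesRestrict 𝓑 X) Y =
      (𝓑.filter fun B => (B ∩ Y).card = rnk 𝓑 Y ∧ (B ∩ X).card = rnk 𝓑 X).image (· ∩ Y) := by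
  ext J
  simp only [mem_basesRestrict_def, mem_image]
  constructor
  · rintro ⟨hJY, ⟨B'', hB'', hJB''⟩, hmax⟩
    obtain ⟨B, hB, hBX, rfl⟩ := (mem_basesRestrict_iff hM).mp hB''
    obtain ⟨B', hB', hsub, hY', hX'⟩ := raise' hM hYX hB hBX
    have hJB' : J ⊆ B' ∩ Y :=
      subset_inter ((subset_inter (hJB''.trans inter_subset_left) hJY).trans hsub) hJY
    have h1 : J = B' ∩ Y := by
      refine hmax (B' ∩ Y) inter_subset_right ?_ hJB'
      exact ⟨B' ∩ X, (mem_basesRestrict_iff hM).mpr ⟨B', hB', hX', rfl⟩,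
        inter_subset_inter_left hYX⟩
    exact ⟨B', mem_filter.mpr ⟨hB', hY', hX'⟩, h1.symm⟩
  · rintro ⟨B, hBf, rfl⟩
    rw [mem_filter] at hBf
    obtain ⟨hB, hBY, hBX⟩ := hBf
    refine ⟨inter_subset_right, ⟨B ∩ X, (mem_basesRestrict_iff hM).mpr ⟨B, hB, hBX, rfl⟩,
      inter_subset_inter_left hYX⟩, ?_⟩
    intro J' hJ' ⟨B'', hB'', hJB''⟩ hsub
    obtain ⟨Bt, hBt, hBtX, rfl⟩ := (mem_basesRestrict_iff hM).mp hB''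
    have h1 : J' ⊆ Bt ∩ Y :=
      subset_inter (hJB''.trans inter_subset_left) hJ'
    have h2 : J'.card ≤ (B ∩ Y).card := by
      have := card_le_card h1
      have := le_rnk hBt Y
      omega
    exact Finset.eq_of_subset_of_card_le hsub h2

lemma minorBases_eq (hM : IsMatroid n 𝓑) {X Y : Finset (Fin n)} (hYX : Y ⊆ X) :
    minorBases 𝓑 X Y =
      (𝓑.filter fun B => (B ∩ Y).card = rnk 𝓑 Y ∧ (B ∩ X).card = rnk 𝓑 X).image
        (· ∩ (X \ Y)) := by
  ext I
  simp only [minorBases, basesContract, mem_filter, mem_powerset, mem_image]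
  constructor
  · rintro ⟨-, hdisj, BA, hBA, hun⟩
    rw [basesRestrict_restrict hM hYX] at hBA
    simp only [mem_image, mem_filter] at hBA
    obtain ⟨Bh, ⟨hBh, hBhY, hBhX⟩, rfl⟩ := hBA
    obtain ⟨B, hB, hBX, hIeq⟩ := (mem_basesRestrict_iff hM).mp hun
    have hIeq' : I = B ∩ (X \ Y) := by
      have h1 : I = (I ∪ Bh ∩ Y) \ Y := by
        ext x
        simp only [mem_sdiff, mem_union, mem_inter]
        constructor
        · intro hx
          exact ⟨Or.inl hx, Finset.disjoint_left.mp hdisj hx⟩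
        · rintro ⟨hx | ⟨-, hx⟩, hxY⟩
          · exact hx
          · exact absurd hx hxY
      rw [h1, hIeq]
      ext x
      simp only [mem_sdiff, mem_inter]
      tauto
    have hBY : B ∩ Y = Bh ∩ Y := by
      have h1 : B ∩ Y = (B ∩ X) ∩ Y := by
        ext x
        simp only [mem_inter]
        exact ⟨fun h => ⟨⟨h.1, hYX h.2⟩, h.2⟩, fun h => ⟨h.1.1, h.2⟩⟩
      rw [← hIeq] at h1
      rw [h1]
      ext x
      simp only [mem_inter, mem_union]
      constructor
      · rintro ⟨hx | ⟨hx1, hx2⟩, hxY⟩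
        · exact absurd hxY (Finset.disjoint_left.mp hdisj hx)
        · exact ⟨hx1, hxY⟩
      · rintro ⟨hx1, hx2⟩
        exact ⟨Or.inr ⟨hx1, hx2⟩, hx2⟩
    refine ⟨B, ⟨hB, ?_, hBX⟩, hIeq'.symm⟩
    rw [hBY]; exact hBhY
  · rintro ⟨B, ⟨hB, hBY, hBX⟩, rfl⟩
    refine ⟨subset_univ _, ?_, B ∩ Y, ?_, ?_⟩
    · exact Finset.disjoint_left.mpr fun x hx => (mem_sdiff.mp (mem_inter.mp hx).2).2
    · rw [basesRestrict_restrict hM hYX]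
      exact mem_image.mpr ⟨B, mem_filter.mpr ⟨hB, hBY, hBX⟩, rfl⟩
    · refine (mem_basesRestrict_iff hM).mpr ⟨B, hB, hBX, ?_⟩
      ext x
      simp only [mem_union, mem_inter, mem_sdiff]
      constructor
      · rintro (⟨hx1, hx2, hx3⟩ | ⟨hx1, hx2⟩)
        · exact ⟨hx1, hx2⟩
        · exact ⟨hx1, hYX hx2⟩
      · rintro ⟨hx1, hx2⟩
        by_cases hxY : x ∈ Y
        · exact Or.inr ⟨hx1, hxY⟩
        · exact Or.inl ⟨hx1, hx2, hxY⟩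

lemma minorBases_subset (hM : IsMatroid n 𝓑) {X Y I : Finset (Fin n)} (hYX : Y ⊆ X)
    (hI : I ∈ minorBases 𝓑 X Y) : I ⊆ X \ Y := by
  rw [minorBases_eq hM hYX] at hI
  obtain ⟨B, -, rfl⟩ := mem_image.mp hI
  exact inter_subset_right

lemma minorBases_card (hM : IsMatroid n 𝓑) {X Y I : Finset (Fin n)} (hYX : Y ⊆ X)
    (hI : I ∈ minorBases 𝓑 X Y) : I.card = rnk 𝓑 X - rnk 𝓑 Y := by
  rw [minorBases_eq hM hYX] at hI
  obtain ⟨B, hB, rfl⟩ := mem_image.mp hI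
  rw [mem_filter] at hB
  obtain ⟨hB, hBY, hBX⟩ := hB
  have h2 : (B ∩ X) ∩ Y = B ∩ Y := by
    ext x; simp only [mem_inter]
    exact ⟨fun h => ⟨h.1.1, h.2⟩, fun h => ⟨⟨h.1, hYX h.2⟩, h.2⟩⟩
  have h3 : (B ∩ X) \ Y = B ∩ (X \ Y) := by
    ext x; simp only [mem_inter, mem_sdiff]; tauto
  have h4 := card_inter_add_card_sdiff (B ∩ X) Y
  rw [h2, h3] at h4
  omega

end FqDual
namespace FqDual
open Finset

variable {n : ℕ} {𝓑 : Finset (Finset (Fin n))}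

lemma compl_compl' (A : Finset (Fin n)) : univ \ (univ \ A) = A := by
  rw [sdiff_sdiff_self_left, univ_inter]

lemma compl_invol : Function.Involutive (fun A : Finset (Fin n) => univ \ A) :=
  fun A => compl_compl' A

lemma mem_dualBases {T : Finset (Fin n)} : T ∈ dualBases 𝓑 ↔ univ \ T ∈ 𝓑 := by
  constructor
  · intro h
    obtain ⟨B, hB, rfl⟩ := mem_image.mp h
    rwa [compl_compl']
  · intro h
    exact mem_image.mpr ⟨univ \ T, h, by rw [compl_compl' T]⟩

lemma dual_isMatroid (hM : IsMatroid n 𝓑) : IsMatroid n (dualBases 𝓑) := by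
  constructor
  · exact hM.1.image _
  · intro T₁ hT₁ T₂ hT₂ i hi
    set B₁ := univ \ T₁ with hB₁def
    set B₂ := univ \ T₂ with hB₂def
    have hB₁ : B₁ ∈ 𝓑 := mem_dualBases.mp hT₁
    have hB₂ : B₂ ∈ 𝓑 := mem_dualBases.mp hT₂
    have hiT : i ∈ T₁ ∧ i ∉ T₂ := mem_sdiff.mp hi
    have hiB₁ : i ∉ B₁ := fun h => (mem_sdiff.mp h).2 hiT.1
    have hiB₂ : i ∈ B₂ := mem_sdiff.mpr ⟨mem_univ i, hiT.2⟩
    set Y := insert i (B₁ ∩ B₂) with hYdef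
    set X := insert i B₁ with hXdef
    have hYX : Y ⊆ X := insert_subset_insert i inter_subset_left
    have hYB₂ : Y ⊆ B₂ := insert_subset hiB₂ inter_subset_right
    have hrY : rnk 𝓑 Y = Y.card := by
      refine le_antisymm (Finset.sup_le fun B _ => card_le_card inter_subset_right) ?_
      have : B₂ ∩ Y = Y := inter_eq_right.mpr hYB₂
      calc Y.card = (B₂ ∩ Y).card := by rw [this]
        _ ≤ rnk 𝓑 Y := le_rnk hB₂ Y
    have hrX : rnk 𝓑 X = B₁.card := by
      refine le_antisymm (Finset.sup_le fun B hB => ?_) ?_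
      · calc (B ∩ X).card ≤ B.card := card_le_card inter_subset_left
          _ = B₁.card := card_eq_card hM B hB B₁ hB₁
      · have : B₁ ∩ X = B₁ := inter_eq_left.mpr (subset_insert i B₁)
        calc B₁.card = (B₁ ∩ X).card := by rw [this]
          _ ≤ rnk 𝓑 X := le_rnk hB₁ X
    obtain ⟨B₀, hB₀, hB₀Y, hB₀X⟩ := exists_bothmax hM hYX
    have hYB₀ : Y ⊆ B₀ := by
      have h1 : B₀ ∩ Y = Y :=
        Finset.eq_of_subset_of_card_le inter_subset_right (by rw [hB₀Y, hrY])
      rw [← h1]; exact inter_subset_left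
    have hB₀sub : B₀ ⊆ X := by
      have hcard : B₀.card = B₁.card := card_eq_card hM B₀ hB₀ B₁ hB₁
      have h1 : B₀ ∩ X = B₀ :=
        Finset.eq_of_subset_of_card_le inter_subset_left (by rw [hB₀X, hrX, hcard])
      rw [← h1]; exact inter_subset_right
    have hiB₀ : i ∈ B₀ := hYB₀ (mem_insert_self _ _)
    have hsd : B₀ \ B₁ = {i} := by
      apply Finset.Subset.antisymm
      · intro x hx
        rcases mem_sdiff.mp hx with ⟨hx1, hx2⟩
        rcases mem_insert.mp (hB₀sub hx1) with rfl | hx3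
        · exact mem_singleton_self _
        · exact absurd hx3 hx2
      · intro x hx
        rw [mem_singleton] at hx
        subst hx
        exact mem_sdiff.mpr ⟨hiB₀, hiB₁⟩
    have hcard01 : B₁.card = B₀.card := card_eq_card hM B₁ hB₁ B₀ hB₀
    have hsd2 : (B₁ \ B₀).card = 1 := by
      have h1 := card_inter_add_card_sdiff B₁ B₀
      have h2 := card_inter_add_card_sdiff B₀ B₁
      rw [inter_comm] at h2
      rw [hsd] at h2
      simp only [card_singleton] at h2
      omega
    obtain ⟨j, hj⟩ := Finset.card_eq_one.mp hsd2
    have hjB₁ : j ∈ B₁ := (mem_sdiff.mp (hj ▸ mem_singleton_self j)).1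
    have hjB₀ : j ∉ B₀ := (mem_sdiff.mp (hj ▸ mem_singleton_self j)).2
    have hjB₂ : j ∉ B₂ := by
      intro h
      exact hjB₀ (hYB₀ (mem_insert_of_mem (mem_inter.mpr ⟨hjB₁, h⟩)))
    have hij : i ≠ j := fun h => hiB₁ (h ▸ hjB₁)
    have hB₀eq : B₀ = insert i (B₁.erase j) := by
      ext x
      simp only [mem_insert, mem_erase]
      constructor
      · intro hx
        rcases mem_insert.mp (hB₀sub hx) with rfl | hx2
        · exact Or.inl rfl
        · exact Or.inr ⟨fun h => hjB₀ (h ▸ hx), hx2⟩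
      · rintro (rfl | ⟨hxj, hx⟩)
        · exact hiB₀
        · by_contra hxB₀
          exact hxj (mem_singleton.mp (hj ▸ mem_sdiff.mpr ⟨hx, hxB₀⟩))
    have hT₁eq : T₁ = univ \ B₁ := by rw [hB₁def, compl_compl']
    have hT₂eq : T₂ = univ \ B₂ := by rw [hB₂def, compl_compl']
    refine ⟨j, mem_sdiff.mpr ⟨?_, ?_⟩, ?_⟩
    · rw [hT₂eq]; exact mem_sdiff.mpr ⟨mem_univ j, hjB₂⟩
    · intro h; rw [hT₁eq] at h; exact (mem_sdiff.mp h).2 hjB₁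
    · rw [mem_dualBases]
      have hmemT : ∀ x, x ∈ T₁ ↔ x ∉ B₁ := by
        intro x
        rw [hB₁def]
        simp [mem_sdiff]
      have : univ \ insert j (T₁.erase i) = B₀ := by
        rw [hB₀eq]
        ext x
        simp only [mem_sdiff, mem_univ, true_and, mem_insert, mem_erase]
        constructor
        · intro hx
          push_neg at hx
          obtain ⟨hxj, hx2⟩ := hx
          by_cases hxi : x = i
          · exact Or.inl hxi
          · refine Or.inr ⟨hxj, ?_⟩
            by_contra hb
            exact (hx2 hxi) ((hmemT x).mpr hb)
        · rintro (rfl | ⟨hxj, hx⟩) <;> intro hcon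
          · rcases hcon with h | ⟨h, -⟩
            · exact hij h
            · exact h rfl
          · rcases hcon with rfl | ⟨-, hT⟩
            · exact hxj rfl
            · exact (hmemT x).mp hT hx
      rw [this]
      exact hB₀

end FqDual
namespace FqDual
open Finset

variable {n : ℕ} {𝓑 : Finset (Finset (Fin n))}

lemma key_dual {A B : Finset (Fin n)} :
    ((univ \ B) ∩ (univ \ A)).card + B.card = (univ \ A).card + (B ∩ A).card := by
  have e1 : (univ \ A) \ B = (univ \ B) ∩ (univ \ A) := by
    ext x; simp only [mem_sdiff, mem_inter, mem_univ, true_and]; tauto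
  have e2 : (univ \ A) ∩ B = B \ A := by
    ext x; simp only [mem_sdiff, mem_inter, mem_univ, true_and]; tauto
  have h1 := card_inter_add_card_sdiff (univ \ A) B
  have h2 := card_inter_add_card_sdiff B A
  rw [e1, e2] at h1
  omega

lemma rnk_dual_eq (hM : IsMatroid n 𝓑) (A : Finset (Fin n)) :
    rnk (dualBases 𝓑) (univ \ A) + rnk 𝓑 univ = (univ \ A).card + rnk 𝓑 A := by
  refine le_antisymm ?_ ?_
  · obtain ⟨T₀, hT₀, hT₀c⟩ := exists_rnk (dual_isMatroid hM).1 (univ \ A)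
    have hB₀ : univ \ T₀ ∈ 𝓑 := mem_dualBases.mp hT₀
    have hk := key_dual (A := A) (B := univ \ T₀)
    rw [compl_compl' T₀] at hk
    have h1 := le_rnk hB₀ A
    have h2 := rnk_univ_eq hM hB₀
    omega
  · obtain ⟨B, hB, hBA⟩ := exists_rnk hM.1 A
    have hT : univ \ B ∈ dualBases 𝓑 := mem_dualBases.mpr (by rwa [compl_compl'])
    have hk := key_dual (A := A) (B := B)
    have h1 := le_rnk hT (univ \ A)
    have h2 := rnk_univ_eq hM hB
    omega

lemma bothmax_dual_iff (hM : IsMatroid n 𝓑) (A : Finset (Fin n)) {B : Finset (Fin n)}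
    (hB : B ∈ 𝓑) :
    ((univ \ B) ∩ (univ \ A)).card = rnk (dualBases 𝓑) (univ \ A) ↔
      (B ∩ A).card = rnk 𝓑 A := by
  have hk := key_dual (A := A) (B := B)
  have h1 := le_rnk hB A
  have hT : univ \ B ∈ dualBases 𝓑 := mem_dualBases.mpr (by rwa [compl_compl'])
  have h2 := le_rnk hT (univ \ A)
  have h3 := rnk_dual_eq hM A
  have h4 := rnk_univ_eq hM hB
  omega

lemma minorBases_dual (hM : IsMatroid n 𝓑) {X Y : Finset (Fin n)} (hYX : Y ⊆ X) :
    minorBases (dualBases 𝓑) (univ \ Y) (univ \ X) =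
      (minorBases 𝓑 X Y).image (fun I => (X \ Y) \ I) := by
  have hMd := dual_isMatroid hM
  have hXcYc : univ \ X ⊆ univ \ Y := sdiff_subset_sdiff (Finset.Subset.refl _) hYX
  rw [minorBases_eq hMd hXcYc, minorBases_eq hM hYX]
  have hS : (univ \ Y) \ (univ \ X) = X \ Y := by
    ext x; simp only [mem_sdiff, mem_univ, true_and]; tauto
  rw [hS]
  ext I
  simp only [mem_image, mem_filter]
  constructor
  · rintro ⟨T, ⟨hT, hTX, hTY⟩, rfl⟩
    have hB : univ \ T ∈ 𝓑 := mem_dualBases.mp hT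
    have hTeq : T = univ \ (univ \ T) := (compl_compl' T).symm
    rw [hTeq] at hTX hTY
    refine ⟨(univ \ T) ∩ (X \ Y), ⟨univ \ T,
      ⟨hB, (bothmax_dual_iff hM Y hB).mp hTY, (bothmax_dual_iff hM X hB).mp hTX⟩, rfl⟩, ?_⟩
    rw [hTeq]
    ext x
    simp only [mem_sdiff, mem_inter, mem_univ, true_and]
    tauto
  · rintro ⟨I', ⟨B, ⟨hB, hBY', hBX'⟩, rfl⟩, rfl⟩
    refine ⟨univ \ B, ⟨mem_dualBases.mpr (by rwa [compl_compl']),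
      (bothmax_dual_iff hM X hB).mpr hBX', (bothmax_dual_iff hM Y hB).mpr hBY'⟩, ?_⟩
    ext x
    simp only [mem_sdiff, mem_inter, mem_univ, true_and]
    tauto

end FqDual
namespace FqDual
open Finset

variable {n : ℕ}

lemma mem_sdImage {S : Finset (Fin n)} {𝓕 : Finset (Finset (Fin n))}
    (hsub : ∀ B ∈ 𝓕, B ⊆ S) {T : Finset (Fin n)} :
    T ∈ 𝓕.image (fun B => S \ B) ↔ T ⊆ S ∧ S \ T ∈ 𝓕 := by
  constructor
  · intro h
    obtain ⟨B, hB, rfl⟩ := mem_image.mp h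
    have h1 : S \ (S \ B) = B := by
      rw [sdiff_sdiff_self_left]
      exact inter_eq_right.mpr (hsub B hB)
    refine ⟨sdiff_subset, ?_⟩
    rw [h1]
    exact hB
  · rintro ⟨h1, h2⟩
    refine mem_image.mpr ⟨S \ T, h2, ?_⟩
    rw [sdiff_sdiff_self_left]
    exact inter_eq_right.mpr h1

lemma mRel_sd_iff {S : Finset (Fin n)} {𝓕 : Finset (Finset (Fin n))}
    (hsub : ∀ B ∈ 𝓕, B ⊆ S) (hcard : ∀ B₁ ∈ 𝓕, ∀ B₂ ∈ 𝓕, B₁.card = B₂.card)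
    {i j : Fin n} (hij : i ≠ j) :
    mRel (𝓕.image (fun B => S \ B)) i j ↔ mRel 𝓕 j i := by
  constructor
  · rintro ⟨T, hT, hiT, hT'⟩
    obtain ⟨hTS, hTc⟩ := (mem_sdImage hsub).mp hT
    set B := S \ T with hBdef
    have hTeq : T = S \ B := by
      rw [hBdef, sdiff_sdiff_self_left]
      exact (inter_eq_right.mpr hTS).symm
    have hiS : i ∈ S := hTS hiT
    have hiB : i ∉ B := fun h => (mem_sdiff.mp h).2 hiT
    obtain ⟨hsubT', hT'c⟩ := (mem_sdImage hsub).mp hT'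
    have hjS : j ∈ S := hsubT' (mem_insert_self _ _)
    have hkey : S \ insert j (T.erase i) = (insert i B).erase j := by
      ext x
      simp only [mem_sdiff, mem_insert, mem_erase, hBdef]
      constructor
      · rintro ⟨hxS, hx⟩
        push_neg at hx
        obtain ⟨hxj, hx2⟩ := hx
        refine ⟨hxj, ?_⟩
        by_cases hxi : x = i
        · exact Or.inl hxi
        · exact Or.inr ⟨hxS, fun hxT => (hx2 hxi) hxT⟩
      · rintro ⟨hxj, rfl | ⟨hxS, hxT⟩⟩
        · refine ⟨hiS, ?_⟩
          rintro (h | ⟨hne, -⟩)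
          · exact hxj h
          · exact hne rfl
        · refine ⟨hxS, ?_⟩
          rintro (h | ⟨-, h⟩)
          · exact hxj h
          · exact hxT h
    rw [hkey] at hT'c
    -- cardinality forces j ∈ B
    have hcB : B.card = ((insert i B).erase j).card := hcard B hTc _ hT'c
    have hcins : (insert i B).card = B.card + 1 := card_insert_of_notMem hiB
    have hjB : j ∈ B := by
      by_contra hjB
      have : j ∉ insert i B := by
        rintro h
        rcases mem_insert.mp h with h | h
        · exact hij h.symm
        · exact hjB h
      rw [erase_eq_of_notMem this] at hcB
      omega
    refine ⟨B, hTc, hjB, ?_⟩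
    have : insert i (B.erase j) = (insert i B).erase j := by
      ext x
      simp only [mem_insert, mem_erase]
      constructor
      · rintro (rfl | ⟨hxj, hx⟩)
        · exact ⟨fun h => hij h, Or.inl rfl⟩
        · exact ⟨hxj, Or.inr hx⟩
      · rintro ⟨hxj, rfl | hx⟩
        · exact Or.inl rfl
        · exact Or.inr ⟨hxj, hx⟩
    rw [this]
    exact hT'c
  · rintro ⟨B₁, hB₁, hjB₁, hB₂mem⟩
    set B₂ := insert i (B₁.erase j) with hB₂def
    have hB₁S : B₁ ⊆ S := hsub B₁ hB₁
    have hjS : j ∈ S := hB₁S hjB₁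
    have hiB₂ : i ∈ B₂ := by rw [hB₂def]; exact mem_insert_self _ _
    have hiS : i ∈ S := hsub B₂ hB₂mem hiB₂
    have hiB₁ : i ∉ B₁ := by
      intro hiB₁
      have hB₂eq : B₂ = B₁.erase j := by
        rw [hB₂def]
        exact insert_eq_self.mpr (mem_erase.mpr ⟨hij, hiB₁⟩)
      have h1 := hcard B₂ hB₂mem B₁ hB₁
      rw [hB₂eq, card_erase_of_mem hjB₁] at h1
      have : 1 ≤ B₁.card := card_pos.mpr ⟨j, hjB₁⟩
      omega
    refine ⟨S \ B₁, mem_image.mpr ⟨B₁, hB₁, rfl⟩, mem_sdiff.mpr ⟨hiS, hiB₁⟩, ?_⟩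
    refine (mem_sdImage hsub).mpr ⟨?_, ?_⟩
    · intro x hx
      rcases mem_insert.mp hx with rfl | hx
      · exact hjS
      · exact (mem_sdiff.mp (mem_of_mem_erase hx)).1
    · have : S \ insert j ((S \ B₁).erase i) = B₂ := by
        ext x
        simp only [mem_sdiff, mem_insert, mem_erase, hB₂def]
        constructor
        · rintro ⟨hxS, hx⟩
          push_neg at hx
          obtain ⟨hxj, hx2⟩ := hx
          by_cases hxi : x = i
          · exact Or.inl hxi
          · refine Or.inr ⟨hxj, ?_⟩
            by_contra hxB₁
            exact hxB₁ (hx2 hxi hxS)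
        · rintro (rfl | ⟨hxj, hxB₁⟩)
          · refine ⟨hiS, ?_⟩
            rintro (h | ⟨hne, -, -⟩)
            · exact hij h
            · exact hne rfl
          · refine ⟨hB₁S hxB₁, ?_⟩
            rintro (h | ⟨-, -, h⟩)
            · exact hxj h
            · exact h hxB₁
      rw [this]
      exact hB₂mem

lemma eqvGen_sd_iff {S : Finset (Fin n)} {𝓕 : Finset (Finset (Fin n))}
    (hsub : ∀ B ∈ 𝓕, B ⊆ S) (hcard : ∀ B₁ ∈ 𝓕, ∀ B₂ ∈ 𝓕, B₁.card = B₂.card)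
    {a b : Fin n} :
    Relation.EqvGen (mRel (𝓕.image (fun B => S \ B))) a b ↔ Relation.EqvGen (mRel 𝓕) a b := by
  constructor
  · intro h
    induction h with
    | rel x y hxy =>
      rcases eq_or_ne x y with rfl | hne
      · exact Relation.EqvGen.refl x
      · exact Relation.EqvGen.symm _ _ (Relation.EqvGen.rel y x
          ((mRel_sd_iff hsub hcard hne).mp hxy))
    | refl x => exact Relation.EqvGen.refl x
    | symm x y _ ih => exact Relation.EqvGen.symm x y ih
    | trans x y z _ _ ih₁ ih₂ => exact Relation.EqvGen.trans x y z ih₁ ih₂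
  · intro h
    induction h with
    | rel x y hxy =>
      rcases eq_or_ne x y with rfl | hne
      · exact Relation.EqvGen.refl x
      · exact Relation.EqvGen.symm _ _ (Relation.EqvGen.rel y x
          ((mRel_sd_iff hsub hcard hne.symm).mpr hxy))
    | refl x => exact Relation.EqvGen.refl x
    | symm x y _ ih => exact Relation.EqvGen.symm x y ih
    | trans x y z _ _ ih₁ ih₂ => exact Relation.EqvGen.trans x y z ih₁ ih₂

lemma cOn_sd {S : Finset (Fin n)} {𝓕 : Finset (Finset (Fin n))}
    (hsub : ∀ B ∈ 𝓕, B ⊆ S) (hcard : ∀ B₁ ∈ 𝓕, ∀ B₂ ∈ 𝓕, B₁.card = B₂.card) :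
    cOn S (𝓕.image (fun B => S \ B)) = cOn S 𝓕 := by
  unfold cOn
  set r₁ := mRel (𝓕.image (fun B => S \ B))
  set r₂ := mRel 𝓕
  have hlift : ∀ a b, r₁ a b → Quot.mk r₂ a = Quot.mk r₂ b := by
    intro a b h
    exact Quot.eq.mpr ((eqvGen_sd_iff hsub hcard).mp (Relation.EqvGen.rel a b h))
  set f : Quot r₁ → Quot r₂ := Quot.lift (Quot.mk r₂) hlift with hfdef
  have hinj : Function.Injective f := by
    intro x y
    refine Quot.induction_on₂ x y ?_
    intro a b hab
    have : Quot.mk r₂ a = Quot.mk r₂ b := hab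
    exact Quot.eq.mpr ((eqvGen_sd_iff hsub hcard).mpr (Quot.eq.mp this))
  have himg : f '' (Quot.mk r₁ '' (S : Set (Fin n))) = Quot.mk r₂ '' (S : Set (Fin n)) := by
    rw [Set.image_image]
  have h2 := Set.ncard_image_of_injective (Quot.mk r₁ '' (S : Set (Fin n))) hinj
  rw [himg] at h2
  exact h2.symm

end FqDual
namespace FqDual
open Finset

variable {n : ℕ}

/-- complement flag -/
def cmpl (C : Finset (Finset (Fin n))) : Finset (Finset (Fin n)) :=
  C.image (fun A => univ \ A)

lemma cmpl_invol : Function.Involutive (cmpl (n := n)) := by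
  intro C
  unfold cmpl
  rw [image_image]
  have : ((fun A : Finset (Fin n) => univ \ A) ∘ fun A => univ \ A) = id := by
    funext A
    simp only [Function.comp_apply, id_eq, compl_compl']
  rw [this, image_id]

lemma card_cmpl (C : Finset (Finset (Fin n))) : (cmpl C).card = C.card :=
  card_image_of_injective C compl_invol.injective

lemma lv_le (C : Finset (Finset (Fin n))) (p : Fin n) : lv C p ≤ C.card :=
  card_filter_le _ _

lemma lv_cmpl (C : Finset (Finset (Fin n))) (p : Fin n) :
    lv (cmpl C) p + lv C p = C.card := by
  unfold lv cmpl
  rw [filter_image]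
  rw [card_image_of_injective _ compl_invol.injective]
  have h1 : C.filter (fun A => p ∉ univ \ A) = C.filter (fun A => ¬ p ∉ A) := by
    refine filter_congr fun A _ => ?_
    simp [mem_sdiff]
  rw [h1, add_comm]
  exact Finset.card_filter_add_card_filter_not (s := C) (p := fun A => p ∉ A)

lemma fullChain_cmpl (C : Finset (Finset (Fin n))) {j : ℕ} (hj : j ≤ C.card + 1) :
    fullChain (cmpl C) j = univ \ fullChain C (C.card + 1 - j) := by
  ext p
  simp only [fullChain, mem_filter, mem_univ, true_and, mem_sdiff]
  have h1 := lv_cmpl C p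
  have h2 := lv_le C p
  omega

lemma fullChain_mono (C : Finset (Finset (Fin n))) {j j' : ℕ} (h : j ≤ j') :
    fullChain C j ⊆ fullChain C j' := by
  intro p hp
  simp only [fullChain, mem_filter, mem_univ, true_and] at hp ⊢
  omega

lemma isFlag_cmpl_of (C : Finset (Finset (Fin n))) (h : IsFlag n C) : IsFlag n (cmpl C) := by
  obtain ⟨h1, h2⟩ := h
  constructor
  · intro A hA
    obtain ⟨A', hA', rfl⟩ := mem_image.mp hA
    obtain ⟨hne, hnu⟩ := h1 A' hA'
    constructor
    · rw [sdiff_nonempty]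
      intro hsub
      exact hnu (Finset.Subset.antisymm (subset_univ A') hsub)
    · intro hcon
      obtain ⟨x, hx⟩ := hne
      have hx2 : x ∈ univ \ A' := by rw [hcon]; exact mem_univ x
      exact (mem_sdiff.mp hx2).2 hx
  · intro A hA B hB
    obtain ⟨A', hA', rfl⟩ := mem_image.mp hA
    obtain ⟨B', hB', rfl⟩ := mem_image.mp hB
    rcases h2 A' hA' B' hB' with h | h
    · exact Or.inr (sdiff_subset_sdiff (Finset.Subset.refl _) h)
    · exact Or.inl (sdiff_subset_sdiff (Finset.Subset.refl _) h)

lemma isFlag_cmpl_iff (C : Finset (Finset (Fin n))) : IsFlag n (cmpl C) ↔ IsFlag n C := by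
  constructor
  · intro h
    have := isFlag_cmpl_of _ h
    rwa [cmpl_invol C] at this
  · exact isFlag_cmpl_of C

/-- the card increments of the complement flag are those of the flag, reflected -/
lemma card_term_cmpl (C : Finset (Finset (Fin n))) {j : ℕ} (hj : j ≤ C.card) :
    ∀ m : ℕ,
      ((fullChain (cmpl C) (j + 1)).card - (fullChain (cmpl C) j).card = m ↔ 
       (fullChain C (C.card - j + 1)).card - (fullChain C (C.card - j)).card = m) := by
  intro m
  rw [fullChain_cmpl C (by omega), fullChain_cmpl C (by omega)]
  have e1 : C.card + 1 - (j + 1) = C.card - j := by omega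
  have e2 : C.card + 1 - j = C.card - j + 1 := by omega
  rw [e1, e2]
  have h1 : fullChain C (C.card - j) ⊆ fullChain C (C.card - j + 1) := fullChain_mono C (by omega)
  have c1 := card_sdiff_of_subset (subset_univ (fullChain C (C.card - j)))
  have c2 := card_sdiff_of_subset (subset_univ (fullChain C (C.card - j + 1)))
  have c3 := card_le_card h1
  have c4 := card_le_card (subset_univ (fullChain C (C.card - j + 1)))
  omega

lemma flagType_cmpl (C : Finset (Finset (Fin n))) :
    flagType (cmpl C) = (flagType C).reverse := by
  unfold flagType
  rw [card_cmpl]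
  apply List.ext_getElem
  · simp
  · intro i h1 h2
    simp only [List.length_map, List.length_range, List.length_reverse] at h1 h2
    have hi : i ≤ C.card := by omega
    rw [List.getElem_reverse]
    simp only [List.getElem_map, List.getElem_range, List.length_map, List.length_range]
    have he : C.card + 1 - 1 - i = C.card - i := by omega
    rw [he]
    exact (card_term_cmpl C hi _).mpr rfl

lemma sdiff_chain (C : Finset (Finset (Fin n))) {a : ℕ} :
    (univ \ fullChain C a) \ (univ \ fullChain C (a + 1)) = fullChain C (a + 1) \ fullChain C a := by
  ext x
  simp only [mem_sdiff, mem_univ, true_and]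
  tauto

end FqDual
namespace FqDual
open Finset

variable {n : ℕ} {𝓑 : Finset (Finset (Fin n))}

lemma rkM_cmpl (hM : IsMatroid n 𝓑) (C : Finset (Finset (Fin n))) :
    rkM (dualBases 𝓑) (cmpl C) = rkM 𝓑 C := by
  unfold rkM
  rw [card_cmpl]
  rw [← Finset.sum_range_reflect (fun j => (fullChain C (j + 1)).card - (fullChain C j).card -
      cOn ((fullChain C (j + 1)) \ (fullChain C j))
        (minorBases 𝓑 (fullChain C (j + 1)) (fullChain C j))) (C.card + 1)]
  refine Finset.sum_congr rfl fun j hj => ?_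
  rw [Finset.mem_range] at hj
  have hjk : j ≤ C.card := by omega
  have e1 : C.card + 1 - 1 - j = C.card - j := by omega
  rw [e1]
  have ea : C.card + 1 - (j + 1) = C.card - j := by omega
  have eb : C.card + 1 - j = C.card - j + 1 := by omega
  have h1 : fullChain (cmpl C) (j + 1) = univ \ fullChain C (C.card - j) := by
    rw [fullChain_cmpl C (by omega), ea]
  have h2 : fullChain (cmpl C) j = univ \ fullChain C (C.card - j + 1) := by
    rw [fullChain_cmpl C (by omega), eb]
  rw [h1, h2]
  have hsub : fullChain C (C.card - j) ⊆ fullChain C (C.card - j + 1) :=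
    fullChain_mono C (by omega)
  rw [minorBases_dual hM hsub, sdiff_chain]
  have hcards : (univ \ fullChain C (C.card - j)).card
      - (univ \ fullChain C (C.card - j + 1)).card
      = (fullChain C (C.card - j + 1)).card - (fullChain C (C.card - j)).card := by
    have c1 := card_sdiff_of_subset (subset_univ (fullChain C (C.card - j)))
    have c2 := card_sdiff_of_subset (subset_univ (fullChain C (C.card - j + 1)))
    have c3 := card_le_card hsub
    have c4 := card_le_card (subset_univ (fullChain C (C.card - j + 1)))
    omega
  rw [hcards]
  congr 1
  exact cOn_sd (fun I hI => minorBases_subset hM hsub hI)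
    (fun I₁ h₁ I₂ h₂ => by rw [minorBases_card hM hsub h₁, minorBases_card hM hsub h₂])

end FqDual


/-- Let `M` be a matroid on `[n]` with dual `M*`.  Writing
`F_q(M) = Σ_{α ⊨ n} p_α(q) M_α` in the monomial basis, one has
`F_q(M*) = Σ_{α ⊨ n} p_α(q) M_{rev(α)}`; i.e. the coefficient of `M_α` in `F_q(M*)` equals the
coefficient of `M_{rev(α)}` in `F_q(M)`. -/
theorem FqMat_dual_reverse (n : ℕ) (hn : 0 < n)
    (𝓑 : Finset (Finset (Fin n))) (h𝓑 : IsMatroid n 𝓑) (q : ℚ) (α : List ℕ) :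
    FqMat n (dualBases 𝓑) q α = FqMat n 𝓑 q α.reverse := by
  classical
  unfold FqMat
  rw [Finsupp.finset_sum_apply, Finsupp.finset_sum_apply]
  refine (Fintype.sum_bijective FqDual.cmpl FqDual.cmpl_invol.bijective _ _ fun C => ?_).symm
  rw [FqDual.isFlag_cmpl_iff, FqDual.rkM_cmpl h𝓑, FqDual.flagType_cmpl]
  by_cases hC : IsFlag n C
  · rw [if_pos hC, if_pos hC]
    rw [Finsupp.smul_apply, Finsupp.smul_apply]
    congr 1
    unfold Mc
    rw [Finsupp.single_apply, Finsupp.single_apply]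
    have : (flagType C = α.reverse) ↔ ((flagType C).reverse = α) := by
      constructor
      · intro h; rw [h, List.reverse_reverse]
      · intro h; rw [← h, List.reverse_reverse]
    rw [if_congr this rfl rfl]
  · rw [if_neg hC, if_neg hC]
    rfl
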